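/- arXiv:1607.04172 — 5 statements merged into one kernel-verified Lean document; each statement's English description precedes it below -/
import Mathlib

section
/- Let a₁, a₂, b₀, b₁, b₂, τ₀ be real with a₁ ≠ 0 and b₀/a₁ not a nonpositive rational making (b₀/a₁)_k vanish for 1 ≤ k ≤ N (i.e., k!·a₁^k·(b₀/a₁)_k ≠ 0 for all 0 ≤ k ≤ N). Define polynomials P_k by P_{-1} = 0, P_0 = 1, and P_{k+1} = (τ₀ − k(k−1)a₂ − k·b₁)·P_k + k·b₂·(N−k+1)·((k−1)a₁ + b₀)·P_{k−1}. If P_{N+1} = 0, then f(z) = Σ_{k=0}^{N} P_k/(k!·a₁^k·(b₀/a₁)_k) · z^k satisfies (a₂z² + a₁z)f'' + (b₂z² + b₁z + b₀)f' − (N·b₂·z + τ₀)f = 0. -/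
open Real Polynomial

theorem aux8 (a₁ a₂ b₀ b₁ b₂ τ₀ : ℝ) (N : ℕ) (D : ℕ → ℝ)
    (hDne : ∀ k, k ≤ N → D k ≠ 0)
    (hDsucc : ∀ m : ℕ, D (m+1) = ((m:ℝ)+1) * ((m:ℝ)*a₁ + b₀) * D m)
    (P : ℕ → ℝ)
    (hPrec : ∀ k : ℕ, P (k + 1) =
      (τ₀ - (k : ℝ) * ((k : ℝ) - 1) * a₂ - (k : ℝ) * b₁) * P k +
      (k : ℝ) * b₂ * ((N : ℝ) - (k : ℝ) + 1) * (((k : ℝ) - 1) * a₁ + b₀) *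
        (if k = 0 then 0 else P (k - 1)))
    (hterm : P (N + 1) = 0) :
    ∀ z : ℝ,
      (a₂ * z ^ 2 + a₁ * z) *
          deriv (deriv (fun x : ℝ => ∑ k ∈ Finset.range (N + 1), P k / D k * x ^ k)) z
        + (b₂ * z ^ 2 + b₁ * z + b₀) *
          deriv (fun x : ℝ => ∑ k ∈ Finset.range (N + 1), P k / D k * x ^ k) z
        - ((N : ℝ) * b₂ * z + τ₀) *
          (∑ k ∈ Finset.range (N + 1), P k / D k * z ^ k)
      = 0 := by
  intro z
  set c : ℕ → ℝ := fun k => if k ≤ N then P k / D k else 0 with hc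
  set p : ℝ[X] := ∑ k ∈ Finset.range (N+1), Polynomial.C (P k / D k) * Polynomial.X ^ k with hp
  have hcoeff : ∀ n, p.coeff n = c n := by
    intro n
    rw [hp]
    simp only [Polynomial.finset_sum_coeff, Polynomial.coeff_C_mul, Polynomial.coeff_X_pow,
      mul_ite, mul_one, mul_zero, hc]
    rw [Finset.sum_ite_eq (Finset.range (N+1)) n (fun k => P k / D k)]
    simp [Nat.lt_succ_iff]
  have key : ∀ m, m ≤ N → ((m:ℝ)+1) * ((m:ℝ)*a₁ + b₀) * c (m+1)
      = (τ₀ - (m:ℝ)*((m:ℝ)-1)*a₂ - (m:ℝ)*b₁) * c m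
        + b₂ * ((N:ℝ) - (m:ℝ) + 1) * (if m = 0 then 0 else c (m-1)) := by
    intro m hm
    have hDm : D m ≠ 0 := hDne m hm
    have hLHS : ((m:ℝ)+1) * ((m:ℝ)*a₁ + b₀) * c (m+1) = P (m+1) / D m := by
      by_cases h : m + 1 ≤ N
      · have hcm1 : c (m+1) = P (m+1) / D (m+1) := by simp [hc, h]
        have hD1 : D (m+1) ≠ 0 := hDne _ h
        rw [hDsucc m] at hD1
        have h2 : ((m:ℝ)+1) * ((m:ℝ)*a₁ + b₀) ≠ 0 := fun h0 => hD1 (by rw [h0, zero_mul])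
        rw [hcm1, hDsucc m]
        field_simp [right_ne_zero_of_mul h2]
      · have hmN : m = N := le_antisymm hm (by omega)
        have hz : c (m+1) = 0 := by simp [hc]; omega
        rw [hz, hmN, hterm]
        simp
    rw [hLHS, hPrec m]
    rcases Nat.eq_zero_or_pos m with h0 | h0
    · subst h0
      have hc0 : c 0 = P 0 / D 0 := by simp [hc]
      norm_num [hc0]
      ring
    · obtain ⟨n, rfl⟩ : ∃ n, m = n + 1 := ⟨m - 1, by omega⟩
      have hDn : D n ≠ 0 := hDne n (by omega)
      have hcm : c (n+1) = P (n+1) / D (n+1) := by simp [hc, hm]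
      have hcn : c n = P n / D n := by
        have : n ≤ N := by omega
        simp [hc, this]
      have hsucc := hDsucc n
      have hD1 : D (n+1) ≠ 0 := hDm
      rw [hsucc] at hD1
      have h2 : ((n:ℝ)+1) * ((n:ℝ)*a₁ + b₀) ≠ 0 := left_ne_zero_of_mul hD1
      simp only [if_neg (Nat.succ_ne_zero n), Nat.add_sub_cancel]
      rw [hcm, hcn, hsucc]
      push_cast
      field_simp [right_ne_zero_of_mul h2]
      ring
  -- coefficients beyond N vanish
  have hczero : ∀ n, N < n → c n = 0 := by
    intro n hn; simp [hc]; omega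
  have hd1 : ∀ n, (derivative p).coeff n = c (n+1) * ((n:ℝ)+1) := by
    intro n; rw [Polynomial.coeff_derivative, hcoeff]
  have hd2 : ∀ n, (derivative (derivative p)).coeff n = c (n+2) * ((n:ℝ)+2) * ((n:ℝ)+1) := by
    intro n; rw [Polynomial.coeff_derivative, hd1]; push_cast; ring_nf
  have hQ : Polynomial.C a₂ * (derivative (derivative p) * Polynomial.X^2)
      + Polynomial.C a₁ * (derivative (derivative p) * Polynomial.X^1)
      + Polynomial.C b₂ * (derivative p * Polynomial.X^2)
      + Polynomial.C b₁ * (derivative p * Polynomial.X^1)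
      + Polynomial.C b₀ * derivative p
      - (Polynomial.C ((N:ℝ) * b₂) * (p * Polynomial.X^1) + Polynomial.C τ₀ * p) = 0 := by
    ext m
    simp only [Polynomial.coeff_sub, Polynomial.coeff_add, Polynomial.coeff_C_mul,
      Polynomial.coeff_mul_X_pow', Polynomial.coeff_zero]
    rcases m with _ | _ | k
    · norm_num [hd1, hcoeff]
      have h := key 0 (Nat.zero_le N)
      norm_num at h
      linarith
    · norm_num [hd1, hd2, hcoeff]
      by_cases hN : 1 ≤ N
      · have h := key 1 hN
        norm_num at h
        linear_combination h
      · have hN0 : N = 0 := by omega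
        have e1 : c 1 = 0 := hczero 1 (by omega)
        have e2 : c 2 = 0 := hczero 2 (by omega)
        have e0 : ((N:ℝ)) = 0 := by rw [hN0]; norm_num
        simp [e1, e2, e0]
    · have h2 : (2:ℕ) ≤ k + 2 := by omega
      have h1 : (1:ℕ) ≤ k + 2 := by omega
      simp only [if_pos h1, if_pos h2, hd1, hd2, hcoeff]
      have e2 : k + 2 - 2 = k := by omega
      have e1 : k + 2 - 1 = k + 1 := by omega
      rw [e2, e1]
      by_cases hk2 : k + 2 ≤ N
      · have h := key (k+2) hk2
        simp only [if_neg (by omega : ¬ k + 2 = 0), Nat.add_sub_cancel] at h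
        push_cast at h ⊢
        linear_combination h
      · have z3 : c (k+3) = 0 := hczero _ (by omega)
        have z2 : c (k+2) = 0 := hczero _ (by omega)
        by_cases hk1 : k + 1 ≤ N
        · have hkN : k + 1 = N := by omega
          have eN : ((N:ℝ)) = (k:ℝ) + 1 := by rw [← hkN]; push_cast; ring
          rw [z2, z3, eN]
          push_cast
          ring
        · have z1 : c (k+1) = 0 := hczero _ (by omega)
          rw [z1, z2, z3]
          ring
  have heval : (fun x : ℝ => ∑ k ∈ Finset.range (N + 1), P k / D k * x ^ k) = fun x => p.eval x := by
    funext x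
    rw [hp]
    simp [Polynomial.eval_finset_sum]
  have hevalz : (∑ k ∈ Finset.range (N + 1), P k / D k * z ^ k) = p.eval z := by
    rw [hp]; simp [Polynomial.eval_finset_sum]
  rw [heval, hevalz,
    show deriv (fun x => p.eval x) = fun x => (derivative p).eval x from funext fun x => Polynomial.deriv p,
    show deriv (fun x => (derivative p).eval x) = fun x => (derivative (derivative p)).eval x from
      funext fun x => Polynomial.deriv (derivative p)]
  have hQz := congrArg (Polynomial.eval z) hQ
  simp only [Polynomial.eval_add, Polynomial.eval_sub, Polynomial.eval_mul, Polynomial.eval_C,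
    Polynomial.eval_pow, Polynomial.eval_X, Polynomial.eval_zero] at hQz
  linear_combination hQz

theorem stmt_8 (a₁ a₂ b₀ b₁ b₂ τ₀ : ℝ) (N : ℕ) (ha₁ : a₁ ≠ 0)
    (hnz : ∀ k ≤ N, (Nat.factorial k : ℝ) * a₁ ^ k * (ascPochhammer ℝ k).eval (b₀ / a₁) ≠ 0)
    (P : ℕ → ℝ) (hP0 : P 0 = 1)
    (hPrec : ∀ k : ℕ, P (k + 1) =
      (τ₀ - (k : ℝ) * ((k : ℝ) - 1) * a₂ - (k : ℝ) * b₁) * P k +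
      (k : ℝ) * b₂ * ((N : ℝ) - (k : ℝ) + 1) * (((k : ℝ) - 1) * a₁ + b₀) *
        (if k = 0 then 0 else P (k - 1)))
    (hterm : P (N + 1) = 0) :
    ∀ z : ℝ,
      (a₂ * z ^ 2 + a₁ * z) *
          deriv (deriv (fun x : ℝ => ∑ k ∈ Finset.range (N + 1),
            P k / ((Nat.factorial k : ℝ) * a₁ ^ k * (ascPochhammer ℝ k).eval (b₀ / a₁)) * x ^ k)) z
        + (b₂ * z ^ 2 + b₁ * z + b₀) *
          deriv (fun x : ℝ => ∑ k ∈ Finset.range (N + 1),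
            P k / ((Nat.factorial k : ℝ) * a₁ ^ k * (ascPochhammer ℝ k).eval (b₀ / a₁)) * x ^ k) z
        - ((N : ℝ) * b₂ * z + τ₀) *
          (∑ k ∈ Finset.range (N + 1),
            P k / ((Nat.factorial k : ℝ) * a₁ ^ k * (ascPochhammer ℝ k).eval (b₀ / a₁)) * z ^ k)
      = 0 := by
  have hDsucc : ∀ m : ℕ, (Nat.factorial (m+1) : ℝ) * a₁ ^ (m+1) * (ascPochhammer ℝ (m+1)).eval (b₀ / a₁)
      = ((m:ℝ)+1) * ((m:ℝ)*a₁ + b₀) *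
        ((Nat.factorial m : ℝ) * a₁ ^ m * (ascPochhammer ℝ m).eval (b₀ / a₁)) := by
    intro m
    rw [ascPochhammer_succ_right]
    simp only [Nat.factorial_succ, pow_succ, Polynomial.eval_mul, Polynomial.eval_add,
      Polynomial.eval_X, Polynomial.eval_natCast, Nat.cast_mul, Nat.cast_add, Nat.cast_one]
    field_simp
    ring
  exact aux8 a₁ a₂ b₀ b₁ b₂ τ₀ N
    (fun k => (Nat.factorial k : ℝ) * a₁ ^ k * (ascPochhammer ℝ k).eval (b₀ / a₁))
    hnz hDsucc P hPrec hterm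
end

section
/- For N = 2 and b₀ ≠ 0, a₁ + b₀ ≠ 0, the polynomial f₂(z) = 1 + (τ₀/b₀)z + ((τ₀² − b₁τ₀ + 2b₀b₂)/(2b₀(a₁+b₀)))z² satisfies (a₂z² + a₁z)f'' + (b₂z² + b₁z + b₀)f' − (τ₁z + τ₀)f = 0 if and only if τ₁ = 2b₂ and τ₀³ − (2a₂ + 3b₁)τ₀² + 2(b₁(a₂+b₁) + (a₁+2b₀)b₂)τ₀ − 4b₀(a₂+b₁)b₂ = 0. -/
lemma deriv_quad (c0 c1 c2 : ℝ) :
    deriv (fun x : ℝ => c0 + c1 * x + c2 * x ^ 2) = fun x => c1 + 2 * c2 * x := by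
  funext x
  have h : HasDerivAt (fun x : ℝ => c0 + c1 * x + c2 * x ^ 2) (c1 + 2 * c2 * x) x := by
    have h1 : HasDerivAt (fun x : ℝ => c0 + c1 * x) c1 x := by
      simpa using ((hasDerivAt_id x).const_mul c1).const_add c0
    have h2 : HasDerivAt (fun x : ℝ => c2 * x ^ 2) (c2 * (2 * x)) x := by
      simpa using ((hasDerivAt_pow 2 x).const_mul c2)
    simpa [Pi.add_def, mul_comm, mul_assoc, mul_left_comm] using h1.add h2
  exact h.deriv

lemma deriv_lin (c1 c2 : ℝ) :
    deriv (fun x : ℝ => c1 + 2 * c2 * x) = fun _ => 2 * c2 := by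
  funext x
  have h : HasDerivAt (fun x : ℝ => c1 + 2 * c2 * x) (2 * c2) x := by
    simpa using ((hasDerivAt_id x).const_mul (2*c2)).const_add c1
  exact h.deriv

theorem stmt_10 (a₁ a₂ b₀ b₁ b₂ τ₀ τ₁ : ℝ) (hb₀ : b₀ ≠ 0) (hab : a₁ + b₀ ≠ 0) :
    (∀ z : ℝ,
      (a₂ * z ^ 2 + a₁ * z) *
          deriv (deriv (fun x : ℝ => 1 + (τ₀ / b₀) * x +
            ((τ₀ ^ 2 - b₁ * τ₀ + 2 * b₀ * b₂) / (2 * b₀ * (a₁ + b₀))) * x ^ 2)) z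
        + (b₂ * z ^ 2 + b₁ * z + b₀) *
          deriv (fun x : ℝ => 1 + (τ₀ / b₀) * x +
            ((τ₀ ^ 2 - b₁ * τ₀ + 2 * b₀ * b₂) / (2 * b₀ * (a₁ + b₀))) * x ^ 2) z
        - (τ₁ * z + τ₀) * (1 + (τ₀ / b₀) * z +
            ((τ₀ ^ 2 - b₁ * τ₀ + 2 * b₀ * b₂) / (2 * b₀ * (a₁ + b₀))) * z ^ 2) = 0) ↔
    (τ₁ = 2 * b₂ ∧
      τ₀ ^ 3 - (2 * a₂ + 3 * b₁) * τ₀ ^ 2 +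
        2 * (b₁ * (a₂ + b₁) + (a₁ + 2 * b₀) * b₂) * τ₀ -
        4 * b₀ * (a₂ + b₁) * b₂ = 0) := by
  rw [deriv_quad, deriv_lin]
  have hD : (2 * b₀ * (a₁ + b₀)) ≠ 0 :=
    mul_ne_zero (mul_ne_zero two_ne_zero hb₀) hab
  constructor
  · intro h
    have key : ∀ z : ℝ,
        (2 * b₀ * (a₁ + b₀) * (2 * b₂ - τ₁)) * z
        + (2 * a₂ * (τ₀ ^ 2 - b₁ * τ₀ + 2 * b₀ * b₂)
            + 2 * (a₁ + b₀) * b₂ * τ₀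
            + 2 * b₁ * (τ₀ ^ 2 - b₁ * τ₀ + 2 * b₀ * b₂)
            - 2 * (a₁ + b₀) * τ₀ * τ₁
            - τ₀ * (τ₀ ^ 2 - b₁ * τ₀ + 2 * b₀ * b₂)) * z ^ 2
        + ((2 * b₂ - τ₁) * (τ₀ ^ 2 - b₁ * τ₀ + 2 * b₀ * b₂)) * z ^ 3 = 0 := by
      intro z
      have hz := h z
      beta_reduce at hz
      have e1 : τ₀ / b₀ * b₀ = τ₀ := div_mul_cancel₀ _ hb₀
      have e2 : (τ₀ ^ 2 - b₁ * τ₀ + 2 * b₀ * b₂) / (2 * b₀ * (a₁ + b₀)) *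
          (2 * b₀ * (a₁ + b₀)) = τ₀ ^ 2 - b₁ * τ₀ + 2 * b₀ * b₂ :=
        div_mul_cancel₀ _ hD
      linear_combination (2 * b₀ * (a₁ + b₀)) * hz
        - (2 * (a₂ * z ^ 2 + a₁ * z) + 2 * z * (b₂ * z ^ 2 + b₁ * z + b₀)
            - z ^ 2 * (τ₁ * z + τ₀)) * e2
        - (2 * (a₁ + b₀) * ((b₂ * z ^ 2 + b₁ * z + b₀) - z * (τ₁ * z + τ₀))) * e1
    have e1 := key 1
    have e2 := key (-1)
    have e3 := key 2
    norm_num at e1 e2 e3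
    have hA : 2 * b₀ * (a₁ + b₀) * (2 * b₂ - τ₁) = 0 := by linarith
    have hB : (2 * a₂ * (τ₀ ^ 2 - b₁ * τ₀ + 2 * b₀ * b₂)
            + 2 * (a₁ + b₀) * b₂ * τ₀
            + 2 * b₁ * (τ₀ ^ 2 - b₁ * τ₀ + 2 * b₀ * b₂)
            - 2 * (a₁ + b₀) * τ₀ * τ₁
            - τ₀ * (τ₀ ^ 2 - b₁ * τ₀ + 2 * b₀ * b₂)) = 0 := by linarith
    have hτ : τ₁ = 2 * b₂ := by
      rcases mul_eq_zero.mp hA with h' | h'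
      · exact absurd h' hD
      · linarith
    subst hτ
    exact ⟨rfl, by linear_combination -hB⟩
  · rintro ⟨rfl, hcub⟩
    intro z
    beta_reduce
    have e1 : τ₀ / b₀ * b₀ = τ₀ := div_mul_cancel₀ _ hb₀
    have e2 : (τ₀ ^ 2 - b₁ * τ₀ + 2 * b₀ * b₂) / (2 * b₀ * (a₁ + b₀)) *
        (2 * b₀ * (a₁ + b₀)) = τ₀ ^ 2 - b₁ * τ₀ + 2 * b₀ * b₂ :=
      div_mul_cancel₀ _ hD
    apply mul_left_cancel₀ hD
    rw [mul_zero]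
    linear_combination (-(z ^ 2)) * hcub
      + (2 * (a₂ * z ^ 2 + a₁ * z) + 2 * z * (b₂ * z ^ 2 + b₁ * z + b₀)
          - z ^ 2 * (2 * b₂ * z + τ₀)) * e2
      + (2 * (a₁ + b₀) * ((b₂ * z ^ 2 + b₁ * z + b₀) - z * (2 * b₂ * z + τ₀))) * e1
end

section
/- The function ψ(z) = sech(z)^{(1+√13)/2} · exp(−((4+√13)/2)·sech(z)²) satisfies −ψ''(z) − (29 + 8√13)·(sinh(z)⁴/cosh(z)⁶)·ψ(z) = −((7+√13)/2)·ψ(z) for all real z. -/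
open Real

private lemma hd_inv_cosh (x : ℝ) :
    HasDerivAt (fun x : ℝ => 1 / Real.cosh x) (-Real.sinh x / Real.cosh x ^ 2) x := by
  have hc := Real.cosh_pos x
  have := (hasDerivAt_const x (1:ℝ)).div (Real.hasDerivAt_cosh x) hc.ne'
  exact this.congr_deriv (by ring)

private lemma hd_psi (a b x : ℝ) :
    HasDerivAt (fun x : ℝ => (1 / Real.cosh x) ^ a * Real.exp (-b * (1 / Real.cosh x) ^ 2))
      (((1 / Real.cosh x) ^ a * Real.exp (-b * (1 / Real.cosh x) ^ 2)) *
        ((-a * Real.sinh x * Real.cosh x ^ 2 + 2 * b * Real.sinh x) / Real.cosh x ^ 3)) x := by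
  have hc := Real.cosh_pos x
  have h1 := hd_inv_cosh x
  have h2 : HasDerivAt (fun x : ℝ => (1 / Real.cosh x) ^ a)
      ((-Real.sinh x / Real.cosh x ^ 2) * a * (1 / Real.cosh x) ^ (a - 1)) x :=
    h1.rpow_const (Or.inl (by positivity))
  have hpow : (1 / Real.cosh x) ^ (a - 1) = (1 / Real.cosh x) ^ a * Real.cosh x := by
    rw [Real.rpow_sub (by positivity), Real.rpow_one]
    field_simp
  have h3 : HasDerivAt (fun x : ℝ => -b * (1 / Real.cosh x) ^ 2)
      (-b * ((2 : ℕ) * (1 / Real.cosh x) ^ (2 - 1) * (-Real.sinh x / Real.cosh x ^ 2))) x :=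
    (h1.pow 2).const_mul (-b)
  have h4 := h3.exp
  have h5 := h2.mul h4
  refine h5.congr_deriv ?_
  rw [hpow]
  field_simp
  ring_nf
  field_simp
  ring

private lemma hd_g (a b x : ℝ) :
    HasDerivAt (fun x : ℝ =>
        (-a * Real.sinh x * Real.cosh x ^ 2 + 2 * b * Real.sinh x) / Real.cosh x ^ 3)
      (((-a * (Real.cosh x ^ 3 + 2 * Real.sinh x ^ 2 * Real.cosh x) + 2 * b * Real.cosh x) *
          Real.cosh x ^ 3 -
        (-a * Real.sinh x * Real.cosh x ^ 2 + 2 * b * Real.sinh x) *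
          (3 * Real.cosh x ^ 2 * Real.sinh x)) / (Real.cosh x ^ 3) ^ 2) x := by
  have hc := Real.cosh_pos x
  have hs := Real.hasDerivAt_sinh x
  have hcc := Real.hasDerivAt_cosh x
  have hN : HasDerivAt (fun x : ℝ => -a * Real.sinh x * Real.cosh x ^ 2 + 2 * b * Real.sinh x)
      (-a * (Real.cosh x ^ 3 + 2 * Real.sinh x ^ 2 * Real.cosh x) + 2 * b * Real.cosh x) x := by
    have h1 := ((hs.const_mul (-a)).mul (hcc.pow 2)).add (hs.const_mul (2 * b))
    refine h1.congr_deriv ?_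
    simp only [Pi.pow_apply]
    push_cast
    ring
  have hD : HasDerivAt (fun x : ℝ => Real.cosh x ^ 3) (3 * Real.cosh x ^ 2 * Real.sinh x) x := by
    have := hcc.pow 3
    exact this.congr_deriv (by norm_num)
  exact hN.div hD (by positivity)

theorem stmt_11 :
    ∀ z : ℝ,
      -(deriv (deriv (fun x : ℝ =>
          (1 / Real.cosh x) ^ ((1 + Real.sqrt 13) / 2) *
            Real.exp (-((4 + Real.sqrt 13) / 2) * (1 / Real.cosh x) ^ 2))) z)
        - (29 + 8 * Real.sqrt 13) * (Real.sinh z ^ 4 / Real.cosh z ^ 6) *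
          ((1 / Real.cosh z) ^ ((1 + Real.sqrt 13) / 2) *
            Real.exp (-((4 + Real.sqrt 13) / 2) * (1 / Real.cosh z) ^ 2))
      = -((7 + Real.sqrt 13) / 2) *
          ((1 / Real.cosh z) ^ ((1 + Real.sqrt 13) / 2) *
            Real.exp (-((4 + Real.sqrt 13) / 2) * (1 / Real.cosh z) ^ 2)) := by
  intro z
  have hc := Real.cosh_pos z
  have hc2 : Real.cosh z ^ 2 = Real.sinh z ^ 2 + 1 := Real.cosh_sq z
  have hr2 : Real.sqrt 13 ^ 2 = 13 := Real.sq_sqrt (by norm_num)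
  set a : ℝ := (1 + Real.sqrt 13) / 2 with ha
  set b : ℝ := (4 + Real.sqrt 13) / 2 with hb
  have hderiv1 : deriv (fun x : ℝ =>
      (1 / Real.cosh x) ^ a * Real.exp (-b * (1 / Real.cosh x) ^ 2))
      = fun x : ℝ => ((1 / Real.cosh x) ^ a * Real.exp (-b * (1 / Real.cosh x) ^ 2)) *
        ((-a * Real.sinh x * Real.cosh x ^ 2 + 2 * b * Real.sinh x) / Real.cosh x ^ 3) :=
    funext fun x => (hd_psi a b x).deriv
  rw [hderiv1]
  have hd2 := ((hd_psi a b z).mul (hd_g a b z)).deriv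
  simp only [Pi.mul_def] at hd2
  rw [hd2]
  set F : ℝ := (1 / Real.cosh z) ^ a * Real.exp (-b * (1 / Real.cosh z) ^ 2) with hF
  have key : ((-a * Real.sinh z * Real.cosh z ^ 2 + 2 * b * Real.sinh z) / Real.cosh z ^ 3) *
        ((-a * Real.sinh z * Real.cosh z ^ 2 + 2 * b * Real.sinh z) / Real.cosh z ^ 3) +
      ((-a * (Real.cosh z ^ 3 + 2 * Real.sinh z ^ 2 * Real.cosh z) + 2 * b * Real.cosh z) *
          Real.cosh z ^ 3 -
        (-a * Real.sinh z * Real.cosh z ^ 2 + 2 * b * Real.sinh z) *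
          (3 * Real.cosh z ^ 2 * Real.sinh z)) / (Real.cosh z ^ 3) ^ 2
      = (7 + Real.sqrt 13) / 2 -
        (29 + 8 * Real.sqrt 13) * (Real.sinh z ^ 4 / Real.cosh z ^ 6) := by
    rw [ha, hb]
    have hcne : Real.cosh z ≠ 0 := hc.ne'
    field_simp
    linear_combination
      (52 - 4 * Real.sqrt 13 ^ 2 - 52 * Real.cosh z ^ 2 + 4 * Real.cosh z ^ 2 * Real.sqrt 13 ^ 2 -
        3 * Real.cosh z ^ 4 - 4 * Real.cosh z ^ 4 * Real.sqrt 13 -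
        Real.cosh z ^ 4 * Real.sqrt 13 ^ 2 - 116 * Real.sinh z ^ 2 -
        32 * Real.sinh z ^ 2 * Real.sqrt 13) * hc2 +
      (-4 + 8 * Real.cosh z ^ 2 - 5 * Real.cosh z ^ 4 + Real.cosh z ^ 6) * hr2
  linear_combination (-F) * key
end

section
/- The function ψ(z) = tanh(z) · sech(z)^{(3+√61)/2} · exp(−((8+√61)/2)·sech(z)²) satisfies −ψ''(z) − (125 + 16√61)·(sinh(z)⁴/cosh(z)⁶)·ψ(z) = −((35+3√61)/2)·ψ(z) for all real z. -/
open Real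

private lemma cosh_ne (x : ℝ) : Real.cosh x ≠ 0 := (Real.cosh_pos x).ne'

private lemma sech_ne (x : ℝ) : 1 / Real.cosh x ≠ 0 := one_div_ne_zero (cosh_ne x)

private lemma hasDerivAt_sech (x : ℝ) :
    HasDerivAt (fun x : ℝ => 1 / Real.cosh x)
      (-(Real.tanh x * (1 / Real.cosh x))) x := by
  have h := (Real.hasDerivAt_cosh x).inv (cosh_ne x)
  have e : -(Real.tanh x * (1 / Real.cosh x)) = -Real.sinh x / Real.cosh x ^ 2 := by
    rw [Real.tanh_eq_sinh_div_cosh]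
    field_simp
  rw [e]
  simp only [one_div]
  exact h

private lemma hasDerivAt_tanh' (x : ℝ) :
    HasDerivAt Real.tanh ((1 / Real.cosh x) ^ 2) x := by
  have h := (Real.hasDerivAt_sinh x).div (Real.hasDerivAt_cosh x) (cosh_ne x)
  have hf : Real.tanh = fun x => Real.sinh x / Real.cosh x :=
    funext Real.tanh_eq_sinh_div_cosh
  have e : (1 / Real.cosh x) ^ 2 =
      (Real.cosh x * Real.cosh x - Real.sinh x * Real.sinh x) / Real.cosh x ^ 2 := by
    rw [div_pow, one_pow,
      show Real.cosh x * Real.cosh x - Real.sinh x * Real.sinh x = 1 from by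
        linear_combination Real.cosh_sq_sub_sinh_sq x]
  rw [hf, e]
  exact h

private lemma key1 (a b x : ℝ) :
    HasDerivAt (fun x : ℝ =>
        Real.tanh x * (1 / Real.cosh x) ^ a *
          Real.exp (-b * (1 / Real.cosh x) ^ 2))
      (Real.exp (-b * (1 / Real.cosh x) ^ 2) * (1 / Real.cosh x) ^ a *
        ((1 / Real.cosh x) ^ 2 - a * Real.tanh x ^ 2 +
          2 * b * Real.tanh x ^ 2 * (1 / Real.cosh x) ^ 2)) x := by
  have h1 := hasDerivAt_tanh' x
  have h2 : HasDerivAt (fun x : ℝ => (1 / Real.cosh x) ^ a)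
      (-(Real.tanh x * (1 / Real.cosh x)) * a * (1 / Real.cosh x) ^ (a - 1)) x :=
    (hasDerivAt_sech x).rpow_const (Or.inl (sech_ne x))
  have h3 : HasDerivAt (fun x : ℝ => -b * (1 / Real.cosh x) ^ 2)
      (-b * ((2 : ℕ) * (1 / Real.cosh x) ^ (2 - 1) * (-(Real.tanh x * (1 / Real.cosh x))))) x :=
    ((hasDerivAt_sech x).pow 2).const_mul (-b)
  have h4 := h3.exp
  have h := (h1.mul h2).mul h4
  refine h.congr_deriv ?_
  simp only [Pi.mul_apply]
  rw [Real.rpow_sub_one (sech_ne x)]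
  field_simp [cosh_ne x]
  linear_combination (2 * Real.tanh x ^ 2 * b) * mul_inv_cancel₀ (cosh_ne x)

private lemma key2 (a b x : ℝ) :
    HasDerivAt (fun x : ℝ =>
        Real.exp (-b * (1 / Real.cosh x) ^ 2) * (1 / Real.cosh x) ^ a *
          ((1 / Real.cosh x) ^ 2 - a * Real.tanh x ^ 2 +
            2 * b * Real.tanh x ^ 2 * (1 / Real.cosh x) ^ 2))
      (Real.exp (-b * (1 / Real.cosh x) ^ 2) * (1 / Real.cosh x) ^ a *
        (Real.tanh x * (2 * b * (1 / Real.cosh x) ^ 2 - a) *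
            ((1 / Real.cosh x) ^ 2 - a * Real.tanh x ^ 2 +
              2 * b * Real.tanh x ^ 2 * (1 / Real.cosh x) ^ 2) +
          (-2 * (1 / Real.cosh x) ^ 2 * Real.tanh x -
            2 * a * Real.tanh x * (1 / Real.cosh x) ^ 2 +
            4 * b * Real.tanh x * (1 / Real.cosh x) ^ 4 -
            4 * b * Real.tanh x ^ 3 * (1 / Real.cosh x) ^ 2))) x := by
  have h1 := hasDerivAt_tanh' x
  have hs := hasDerivAt_sech x
  have h2 : HasDerivAt (fun x : ℝ => (1 / Real.cosh x) ^ a)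
      (-(Real.tanh x * (1 / Real.cosh x)) * a * (1 / Real.cosh x) ^ (a - 1)) x :=
    hs.rpow_const (Or.inl (sech_ne x))
  have h3 : HasDerivAt (fun x : ℝ => -b * (1 / Real.cosh x) ^ 2)
      (-b * ((2 : ℕ) * (1 / Real.cosh x) ^ (2 - 1) * (-(Real.tanh x * (1 / Real.cosh x))))) x :=
    ((hasDerivAt_sech x).pow 2).const_mul (-b)
  have h4 := h3.exp
  have hs2 : HasDerivAt (fun x : ℝ => (1 / Real.cosh x) ^ 2)
      ((2 : ℕ) * (1 / Real.cosh x) ^ (2 - 1) * (-(Real.tanh x * (1 / Real.cosh x)))) x :=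
    hs.pow 2
  have ht2 : HasDerivAt (fun x : ℝ => Real.tanh x ^ 2)
      ((2 : ℕ) * Real.tanh x ^ (2 - 1) * ((1 / Real.cosh x) ^ 2)) x :=
    h1.pow 2
  have hR : HasDerivAt (fun x : ℝ =>
      (1 / Real.cosh x) ^ 2 - a * Real.tanh x ^ 2 +
        2 * b * Real.tanh x ^ 2 * (1 / Real.cosh x) ^ 2)
      (((2 : ℕ) * (1 / Real.cosh x) ^ (2 - 1) * (-(Real.tanh x * (1 / Real.cosh x))))
        - a * ((2 : ℕ) * Real.tanh x ^ (2 - 1) * ((1 / Real.cosh x) ^ 2))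
        + ((2 * b * ((2 : ℕ) * Real.tanh x ^ (2 - 1) * ((1 / Real.cosh x) ^ 2))) *
            (1 / Real.cosh x) ^ 2 +
          (2 * b * Real.tanh x ^ 2) *
            ((2 : ℕ) * (1 / Real.cosh x) ^ (2 - 1) * (-(Real.tanh x * (1 / Real.cosh x)))))) x :=
    (hs2.sub (ht2.const_mul a)).add (((ht2.const_mul (2 * b)).mul hs2))
  have h := (h4.mul h2).mul hR
  refine h.congr_deriv ?_
  simp only [Pi.mul_apply]
  rw [Real.rpow_sub_one (sech_ne x)]
  field_simp [cosh_ne x]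
  linear_combination (2 * Real.tanh x * b + 4 * Real.tanh x ^ 3 * b ^ 2 - 2 * Real.cosh x ^ 2 * Real.tanh x - 4 * Real.cosh x ^ 2 * Real.tanh x ^ 3 * b - 2 * Real.cosh x ^ 2 * Real.tanh x ^ 3 * b * a) * mul_inv_cancel₀ (cosh_ne x)

theorem stmt_12 :
    ∀ z : ℝ,
      -(deriv (deriv (fun x : ℝ =>
          Real.tanh x * (1 / Real.cosh x) ^ ((3 + Real.sqrt 61) / 2) *
            Real.exp (-((8 + Real.sqrt 61) / 2) * (1 / Real.cosh x) ^ 2))) z)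
        - (125 + 16 * Real.sqrt 61) * (Real.sinh z ^ 4 / Real.cosh z ^ 6) *
          (Real.tanh z * (1 / Real.cosh z) ^ ((3 + Real.sqrt 61) / 2) *
            Real.exp (-((8 + Real.sqrt 61) / 2) * (1 / Real.cosh z) ^ 2))
      = -((35 + 3 * Real.sqrt 61) / 2) *
          (Real.tanh z * (1 / Real.cosh z) ^ ((3 + Real.sqrt 61) / 2) *
            Real.exp (-((8 + Real.sqrt 61) / 2) * (1 / Real.cosh z) ^ 2)) := by
  intro z
  set a : ℝ := (3 + Real.sqrt 61) / 2 with ha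
  set b : ℝ := (8 + Real.sqrt 61) / 2 with hb
  have hd1 : deriv (fun x : ℝ =>
      Real.tanh x * (1 / Real.cosh x) ^ a * Real.exp (-b * (1 / Real.cosh x) ^ 2))
      = fun x : ℝ => Real.exp (-b * (1 / Real.cosh x) ^ 2) * (1 / Real.cosh x) ^ a *
        ((1 / Real.cosh x) ^ 2 - a * Real.tanh x ^ 2 +
          2 * b * Real.tanh x ^ 2 * (1 / Real.cosh x) ^ 2) :=
    funext fun x => (key1 a b x).deriv
  rw [hd1, (key2 a b z).deriv]
  have hsc : Real.sinh z ^ 4 / Real.cosh z ^ 6 =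
      Real.tanh z ^ 4 * (1 / Real.cosh z) ^ 2 := by
    rw [Real.tanh_eq_sinh_div_cosh, div_pow]
    field_simp
  rw [hsc]
  have hr : Real.sqrt 61 ^ 2 = 61 := Real.sq_sqrt (by norm_num)
  have hs2 : (1 / Real.cosh z) ^ 2 = 1 - Real.tanh z ^ 2 := by
    rw [Real.tanh_eq_sinh_div_cosh]
    rw [div_pow, div_pow, one_pow]
    rw [eq_sub_iff_add_eq, ← add_div, div_eq_one_iff_eq (pow_ne_zero 2 (cosh_ne z))]
    linarith [Real.cosh_sq_sub_sinh_sq z]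
  set r : ℝ := Real.sqrt 61
  set t : ℝ := Real.tanh z
  set s : ℝ := 1 / Real.cosh z
  set E : ℝ := Real.exp (-b * s ^ 2)
  set S : ℝ := s ^ a
  rw [ha, hb]
  linear_combination
    (-(E * S)) * ((35/2 + 3/2 * r) * t + (24 + 3 * r) * t * s ^ 2 +
      (64 + 16 * r + r ^ 2) * t ^ 3 * s ^ 2 + (61 - r ^ 2) * t ^ 5) * hs2 +
    (-(E * S)) * (t ^ 3 / 4 - t ^ 5 + t ^ 7) * hr
end

section
/- The system of equations 3 + 2√(−ε) − √v = 0 and ε − (1 + 2√v)√(−ε) − 2√v + v = 0 in the unknowns ε < 0, v > 0 has the unique solution v = 29 + 8√13, ε = −(7+√13)/2. -/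
open Real

theorem stmt_13 (ε v : ℝ) (hε : ε < 0) (hv : 0 < v) :
    (3 + 2 * Real.sqrt (-ε) - Real.sqrt v = 0 ∧
      ε - (1 + 2 * Real.sqrt v) * Real.sqrt (-ε) - 2 * Real.sqrt v + v = 0) ↔
    (v = 29 + 8 * Real.sqrt 13 ∧ ε = -((7 + Real.sqrt 13) / 2)) := by
  have hs : Real.sqrt 13 ^ 2 = 13 := Real.sq_sqrt (by norm_num)
  have hs0 : (0:ℝ) ≤ Real.sqrt 13 := Real.sqrt_nonneg _
  have hs3 : Real.sqrt 13 ≥ 3 := by nlinarith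
  constructor
  · rintro ⟨h1, h2⟩
    set a := Real.sqrt (-ε) with ha
    set b := Real.sqrt v with hb
    have ha2 : a ^ 2 = -ε := Real.sq_sqrt (by linarith)
    have hb2 : b ^ 2 = v := Real.sq_sqrt (by linarith)
    have ha0 : 0 ≤ a := Real.sqrt_nonneg _
    have hb0 : 0 ≤ b := Real.sqrt_nonneg _
    have hbe : b = 3 + 2 * a := by linarith
    -- from h2: a^2 = a + 3
    have key : a ^ 2 = a + 3 := by nlinarith [h2, ha2, hb2, hbe]
    have ha1 : 1 ≤ a := by nlinarith
    have h13 : Real.sqrt 13 = 2 * a - 1 := by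
      rw [show (13:ℝ) = (2 * a - 1) ^ 2 by nlinarith]
      exact Real.sqrt_sq (by linarith)
    constructor
    · nlinarith [hb2, hbe, h13]
    · nlinarith [ha2, h13]
  · rintro ⟨hv', hε'⟩
    have h1 : Real.sqrt v = 4 + Real.sqrt 13 := by
      rw [hv', show (29 + 8 * Real.sqrt 13) = (4 + Real.sqrt 13) ^ 2 by nlinarith]
      exact Real.sqrt_sq (by linarith)
    have h2 : Real.sqrt (-ε) = (1 + Real.sqrt 13) / 2 := by
      rw [hε', show -(-((7 + Real.sqrt 13) / 2)) = ((1 + Real.sqrt 13) / 2) ^ 2 by nlinarith]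
      exact Real.sqrt_sq (by linarith)
    rw [h1, h2, hv', hε']
    constructor <;> nlinarith
end
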